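/- Let p, b, c be positive real constants. Then for every t > 0 one has (p − b/c)·∫_0^t e^{ps}/(s+c)^b ds < e^{pt}/(c+t)^b. -/

import Mathlib

theorem stmt12 (p b c : ℝ) (hp : 0 < p) (hb : 0 < b) (hc : 0 < c) :
    ∀ t : ℝ, 0 < t →
      (p - b / c) * (∫ s in (0:ℝ)..t, Real.exp (p * s) / (s + c) ^ b) <
        Real.exp (p * t) / (c + t) ^ b := by
  intro t ht
  have hct : (0:ℝ) < c + t := by linarith
  set F : ℝ → ℝ := fun s => Real.exp (p * s) * (c + s) ^ (-b) with hFdef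
  set g : ℝ → ℝ := fun s => Real.exp (p * s) * ((c + s) ^ (-b) * (p - b / (c + s)))
    with hgdef
  have hpos : ∀ s ∈ Set.Icc (0:ℝ) t, (0:ℝ) < c + s := fun s hs => by
    have := hs.1; linarith
  have hderiv : ∀ s ∈ Set.Icc (0:ℝ) t, HasDerivAt F (g s) s := by
    intro s hs
    have hcs : (0:ℝ) < c + s := hpos s hs
    have h1 : HasDerivAt (fun s : ℝ => Real.exp (p * s)) (Real.exp (p * s) * p) s := by
      simpa using (((hasDerivAt_id s).const_mul p).exp)
    have h2 : HasDerivAt (fun s : ℝ => (c + s) ^ (-b))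
        (-b * (c + s) ^ (-b - 1) * 1) s := by
      have := (((hasDerivAt_id s).const_add c).rpow_const (p := -b) (Or.inl hcs.ne'))
      simpa [mul_comm] using this
    have h : HasDerivAt (fun s : ℝ => Real.exp (p * s) * (c + s) ^ (-b))
        (Real.exp (p * s) * p * (c + s) ^ (-b) + Real.exp (p * s) * (-b * (c + s) ^ (-b - 1) * 1)) s :=
      h1.mul h2
    convert h using 1
    have hsplit : (c + s) ^ (-b - 1) = (c + s) ^ (-b) * (c + s)⁻¹ := by
      rw [show (-b - 1 : ℝ) = -b + (-1) by ring, Real.rpow_add hcs,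
        Real.rpow_neg_one]
    simp only [hgdef, hsplit]
    field_simp
    ring
  have hcontg : ContinuousOn g (Set.Icc (0:ℝ) t) := by
    apply ContinuousOn.mul (Continuous.continuousOn (by continuity))
    apply ContinuousOn.mul
    · exact ContinuousOn.rpow_const (by fun_prop) fun s hs => Or.inl (hpos s hs).ne'
    · exact ContinuousOn.sub continuousOn_const
        (ContinuousOn.div continuousOn_const (by fun_prop)
          fun s hs => (hpos s hs).ne')
  have hgint : IntervalIntegrable g MeasureTheory.volume 0 t := by
    apply ContinuousOn.intervalIntegrable
    rw [Set.uIcc_of_le ht.le]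
    exact hcontg
  have hfc : ContinuousOn (fun s : ℝ => Real.exp (p * s) / (s + c) ^ b)
      (Set.Icc (0:ℝ) t) := by
    apply ContinuousOn.div (by fun_prop)
    · exact ContinuousOn.rpow_const (by fun_prop) fun s hs => Or.inl
        (by have := hpos s hs; intro h; nlinarith)
    · intro s hs
      have hcs := hpos s hs
      have : (0:ℝ) < s + c := by linarith
      positivity
  have hfint : IntervalIntegrable (fun s : ℝ => (p - b / c) *
      (Real.exp (p * s) / (s + c) ^ b)) MeasureTheory.volume 0 t := by
    apply ContinuousOn.intervalIntegrable
    rw [Set.uIcc_of_le ht.le]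
    exact hfc.const_smul (p - b / c)
  have hftc : ∫ s in (0:ℝ)..t, g s = F t - F 0 := by
    apply intervalIntegral.integral_eq_sub_of_hasDerivAt _ hgint
    intro s hs
    exact hderiv s (by rwa [Set.uIcc_of_le ht.le] at hs)
  have hmono : ∫ s in (0:ℝ)..t, (p - b / c) * (Real.exp (p * s) / (s + c) ^ b) ≤
      ∫ s in (0:ℝ)..t, g s := by
    apply intervalIntegral.integral_mono_on ht.le hfint hgint
    intro s hs
    have hcs := hpos s hs
    have hsc : (0:ℝ) < s + c := by linarith
    have hfeq : Real.exp (p * s) / (s + c) ^ b =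
        Real.exp (p * s) * (c + s) ^ (-b) := by
      rw [Real.rpow_neg hcs.le, add_comm c s, div_eq_mul_inv]
    rw [hfeq, hgdef]
    have hbase : (0:ℝ) < Real.exp (p * s) * (c + s) ^ (-b) := by
      have := Real.rpow_pos_of_pos hcs (-b); positivity
    have hfac : p - b / c ≤ p - b / (c + s) := by
      have : b / (c + s) ≤ b / c := by
        apply div_le_div_of_nonneg_left hb.le hc
        linarith [hs.1]
      linarith
    calc (p - b / c) * (Real.exp (p * s) * (c + s) ^ (-b))
        ≤ (p - b / (c + s)) * (Real.exp (p * s) * (c + s) ^ (-b)) := by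
          exact mul_le_mul_of_nonneg_right hfac hbase.le
      _ = Real.exp (p * s) * ((c + s) ^ (-b) * (p - b / (c + s))) := by ring
  have hF0 : (0:ℝ) < F 0 := by
    simp only [hFdef]
    have := Real.rpow_pos_of_pos (show (0:ℝ) < c + 0 by linarith) (-b)
    positivity
  have hFt : F t = Real.exp (p * t) / (c + t) ^ b := by
    simp only [hFdef]
    rw [Real.rpow_neg hct.le, div_eq_mul_inv]
  have key : (p - b / c) * (∫ s in (0:ℝ)..t, Real.exp (p * s) / (s + c) ^ b) ≤
      F t - F 0 := by
    rw [← hftc, ← intervalIntegral.integral_const_mul]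
    exact hmono
  calc (p - b / c) * (∫ s in (0:ℝ)..t, Real.exp (p * s) / (s + c) ^ b)
      ≤ F t - F 0 := key
    _ < F t := by linarith
    _ = Real.exp (p * t) / (c + t) ^ b := hFt
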